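/- For the binary Rudin–Shapiro sequence w : ℤ → {±1} (defined by w(−1)=−1, w(0)=1, w(4n+ℓ)=w(n) for ℓ∈{0,1}, w(4n+ℓ)=(−1)^{n+ℓ}w(n) for ℓ∈{2,3}), and for every fixed m ≠ 0, the averages (1/(2N+1)) ∑_{n=−N}^{N} w(n)·w(n+m) converge to 0 as N → ∞. -/

import Mathlib

open Filter Finset

namespace RSaux

lemma neg_one_zpow_ne : (-1:ℝ) ≠ 0 := by norm_num

lemma zmul (k j : ℤ) : (-1:ℝ)^k * (-1:ℝ)^(k+j) = (-1:ℝ)^j := by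
  rw [zpow_add₀ neg_one_zpow_ne, ← mul_assoc, ← zpow_add₀ neg_one_zpow_ne]
  have : k + k = 2*k := by ring
  rw [this, zpow_mul]; norm_num

lemma zsq (k : ℤ) : (-1:ℝ)^k * (-1:ℝ)^k = 1 := by
  have := zmul k 0; simpa using this

lemma zeven (k : ℤ) : (-1:ℝ)^(2*k) = 1 := by rw [zpow_mul]; norm_num

lemma zodd (k : ℤ) : (-1:ℝ)^(2*k+1) = -1 := by
  rw [zpow_add₀ neg_one_zpow_ne, zeven]; norm_num

lemma zpm (k : ℤ) : (-1:ℝ)^k = 1 ∨ (-1:ℝ)^k = -1 := mul_self_eq_one_iff.mp (zsq k)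

lemma zabs (k : ℤ) : |(-1:ℝ)^k| = 1 := by rcases zpm k with h | h <;> rw [h] <;> norm_num

noncomputable def S (h : ℤ → ℝ) (a b : ℤ) : ℝ := ∑ n ∈ Finset.Ico a b, h n

lemma S_split (h : ℤ → ℝ) {a b c : ℤ} (hab : a ≤ b) (hbc : b ≤ c) :
    S h a c = S h a b + S h b c := by
  unfold S
  rw [← Finset.sum_union (Finset.Ico_disjoint_Ico_consecutive a b c),
    Finset.Ico_union_Ico_eq_Ico hab hbc]

lemma S_single (h : ℤ → ℝ) (a : ℤ) : S h a (a+1) = h a := by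
  unfold S
  have : Finset.Ico a (a+1) = {a} := by ext x; simp; omega
  rw [this, Finset.sum_singleton]

lemma S_empty (h : ℤ → ℝ) {a b : ℤ} (hba : b ≤ a) : S h a b = 0 := by
  unfold S
  rw [Finset.Ico_eq_empty (by omega), Finset.sum_empty]

lemma S_bound (h : ℤ → ℝ) (hb : ∀ n, |h n| ≤ 1) (a b : ℤ) :
    |S h a b| ≤ ((b - a).toNat : ℝ) := by
  unfold S
  calc |∑ n ∈ Finset.Ico a b, h n| ≤ ∑ n ∈ Finset.Ico a b, |h n| :=
        Finset.abs_sum_le_sum_abs _ _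
    _ ≤ ∑ _n ∈ Finset.Ico a b, (1:ℝ) := Finset.sum_le_sum (fun i _ => hb i)
    _ = ((b - a).toNat : ℝ) := by rw [Finset.sum_const, Int.card_Ico]; simp

lemma S_double (h : ℤ → ℝ) (a b : ℤ) :
    S h (2*a) (2*b) = S (fun k => h (2*k) + h (2*k+1)) a b := by
  rcases le_or_gt b a with hba | hab
  · rw [S_empty _ (by omega), S_empty _ hba]
  · obtain ⟨d, hd⟩ : ∃ d : ℕ, b = a + d := ⟨(b-a).toNat, by omega⟩
    subst hd
    clear hab
    induction d with
    | zero => simp [S_empty]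
    | succ d ih =>
      have h1 : (2*a) ≤ 2*(a+d) := by omega
      have e1 : 2*(a + (d+1:ℕ)) = (2*(a+(d:ℤ))+1) + 1 := by push_cast; ring
      have e2 : a + ((d+1:ℕ):ℤ) = (a + d) + 1 := by push_cast; ring
      rw [e1, e2, S_split h h1 (by omega),
        S_split h (by omega : (2*(a+(d:ℤ))) ≤ 2*(a+(d:ℤ))+1) (by omega),
        S_single, S_single, S_split _ (by omega : a ≤ a + (d:ℤ)) (by omega), S_single, ih]

lemma S_congr {h h' : ℤ → ℝ} (e : ∀ n, h n = h' n) (a b : ℤ) : S h a b = S h' a b := by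
  unfold S; exact Finset.sum_congr rfl (fun n _ => e n)

lemma S_smul (c : ℝ) (h : ℤ → ℝ) (a b : ℤ) : S (fun n => c * h n) a b = c * S h a b := by
  unfold S; rw [Finset.mul_sum]

lemma S_add (h h' : ℤ → ℝ) (a b : ℤ) : S (fun n => h n + h' n) a b = S h a b + S h' a b := by
  unfold S; rw [Finset.sum_add_distrib]

lemma S_sub (h h' : ℤ → ℝ) (a b : ℤ) : S (fun n => h n - h' n) a b = S h a b - S h' a b := by
  unfold S; rw [Finset.sum_sub_distrib]

def Pair (f g : ℤ → ℝ) : Prop :=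
  (∀ n, f n = 1 ∨ f n = -1) ∧ (∀ n, g n = 1 ∨ g n = -1) ∧
  (∀ k, f (2*k) = g k) ∧ (∀ k, f (2*k+1) = (-1:ℝ)^k * g k)

noncomputable def Sa (f : ℤ → ℝ) (m : ℤ) : ℤ → ℤ → ℝ := S (fun n => f n * f (n + m))
noncomputable def Sb (f : ℤ → ℝ) (m : ℤ) : ℤ → ℤ → ℝ :=
  S (fun n => (-1:ℝ)^n * (f n * f (n + m)))

variable {f g : ℤ → ℝ}

lemma Sa_even (hp : Pair f g) (j a b : ℤ) :
    Sa f (2*j) (2*a) (2*b) = (1 + (-1:ℝ)^j) * Sa g j a b := by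
  unfold Sa
  rw [S_double, ← S_smul]
  apply S_congr
  intro k
  have e1 : 2*k + 2*j = 2*(k+j) := by ring
  have e2 : 2*k + 1 + 2*j = 2*(k+j) + 1 := by ring
  rw [e1, e2, hp.2.2.1, hp.2.2.1, hp.2.2.2, hp.2.2.2, zpow_add₀ neg_one_zpow_ne k j]
  rcases zpm k with hk | hk <;> rw [hk] <;> ring

lemma Sa_odd (hp : Pair f g) (j a b : ℤ) :
    Sa f (2*j+1) (2*a) (2*b) = (-1:ℝ)^j * Sb g j a b + Sb g (j+1) a b := by
  unfold Sa Sb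
  rw [S_double, ← S_smul, ← S_add]
  apply S_congr
  intro k
  have e1 : 2*k + (2*j+1) = 2*(k+j) + 1 := by ring
  have e2 : 2*k + 1 + (2*j+1) = 2*(k+(j+1)) := by ring
  rw [e1, e2, hp.2.2.1, hp.2.2.1, hp.2.2.2, hp.2.2.2, zpow_add₀ neg_one_zpow_ne k j]
  rcases zpm k with hk | hk <;> rw [hk] <;> ring

lemma Sb_even (hp : Pair f g) (j a b : ℤ) :
    Sb f (2*j) (2*a) (2*b) = (1 - (-1:ℝ)^j) * Sa g j a b := by
  unfold Sa Sb
  rw [S_double, ← S_smul]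
  apply S_congr
  intro k
  have e1 : 2*k + 2*j = 2*(k+j) := by ring
  have e2 : 2*k + 1 + 2*j = 2*(k+j) + 1 := by ring
  rw [e1, e2, hp.2.2.1, hp.2.2.1, hp.2.2.2, hp.2.2.2, zeven, zodd,
    zpow_add₀ neg_one_zpow_ne k j]
  rcases zpm k with hk | hk <;> rw [hk] <;> ring

lemma Sb_odd (hp : Pair f g) (j a b : ℤ) :
    Sb f (2*j+1) (2*a) (2*b) = (-1:ℝ)^j * Sb g j a b - Sb g (j+1) a b := by
  unfold Sb
  rw [S_double, ← S_smul, ← S_sub]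
  apply S_congr
  intro k
  have e1 : 2*k + (2*j+1) = 2*(k+j) + 1 := by ring
  have e2 : 2*k + 1 + (2*j+1) = 2*(k+(j+1)) := by ring
  rw [e1, e2, hp.2.2.1, hp.2.2.1, hp.2.2.2, hp.2.2.2, zeven, zodd,
    zpow_add₀ neg_one_zpow_ne k j]
  rcases zpm k with hk | hk <;> rw [hk] <;> ring

lemma term_abs (hv : ∀ n, f n = 1 ∨ f n = -1) (m n : ℤ) : |f n * f (n + m)| ≤ 1 := by
  rcases hv n with h1 | h1 <;> rcases hv (n+m) with h2 | h2 <;> rw [h1, h2] <;> norm_num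

lemma termb_abs (hv : ∀ n, f n = 1 ∨ f n = -1) (m n : ℤ) :
    |(-1:ℝ)^n * (f n * f (n + m))| ≤ 1 := by
  rw [abs_mul, zabs, one_mul]; exact term_abs hv m n

lemma Sa_bound (hv : ∀ n, f n = 1 ∨ f n = -1) (m a b : ℤ) :
    |Sa f m a b| ≤ ((b - a).toNat : ℝ) :=
  S_bound _ (fun n => term_abs hv m n) a b

lemma Sb_bound (hv : ∀ n, f n = 1 ∨ f n = -1) (m a b : ℤ) :
    |Sb f m a b| ≤ ((b - a).toNat : ℝ) :=
  S_bound _ (fun n => termb_abs hv m n) a b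

lemma sum_pm_eq (a : ℤ) : ∀ d : ℕ,
    S (fun n => (-1:ℝ)^n) a (a + d) = if Even d then 0 else (-1:ℝ)^a := by
  intro d
  induction d with
  | zero => simp [S_empty]
  | succ d ih =>
    have e : a + ((d+1:ℕ):ℤ) = (a + (d:ℤ)) + 1 := by push_cast; ring
    rw [e, S_split _ (show a ≤ a + (d:ℤ) by omega) (show a + (d:ℤ) ≤ a + (d:ℤ) + 1 by omega),
      S_single]
    have ez : a + ((d:ℕ):ℤ) = a + (d:ℤ) := by norm_cast
    rw [ez] at ih
    rw [ih]
    have hz : (-1:ℝ)^(a + (d:ℤ)) = (-1:ℝ)^a * (-1:ℝ)^((d:ℕ):ℤ) := zpow_add₀ neg_one_zpow_ne a d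
    have hzn : (-1:ℝ)^((d:ℕ):ℤ) = (-1:ℝ)^(d:ℕ) := zpow_natCast _ _
    rcases Nat.even_or_odd d with hd | hd
    · rw [if_pos hd, if_neg (by simp [Nat.even_add_one, hd]), hz, hzn, hd.neg_one_pow]
      ring
    · rw [if_neg (by simp [Nat.not_even_iff_odd.mpr hd]),
        if_pos (by simpa [Nat.even_add_one] using Nat.not_even_iff_odd.mpr hd),
        hz, hzn, hd.neg_one_pow]
      ring

lemma Sb_zero_bound (hv : ∀ n, f n = 1 ∨ f n = -1) (a b : ℤ) : |Sb f 0 a b| ≤ 1 := by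
  have he : Sb f 0 a b = S (fun n => (-1:ℝ)^n) a b := by
    unfold Sb
    apply S_congr
    intro n
    rcases hv n with h | h <;> rw [add_zero, h] <;> ring
  rcases le_or_gt b a with h | h
  · rw [he, S_empty _ h]; norm_num
  · obtain ⟨d, hd⟩ : ∃ d : ℕ, b = a + d := ⟨(b-a).toNat, by omega⟩
    rw [he, hd, sum_pm_eq]
    split
    · norm_num
    · exact le_of_eq (zabs a)

lemma S_trim (h : ℤ → ℝ) (hb : ∀ n, |h n| ≤ 1) {a b α β : ℤ}
    (h1 : a ≤ 2*α) (h1' : 2*α ≤ a + 1) (h2 : 2*α ≤ 2*β) (h3 : 2*β ≤ b) (h3' : b - 1 ≤ 2*β) :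
    |S h a b - S h (2*α) (2*β)| ≤ 2 := by
  rw [S_split h (le_trans h1 h2) h3, S_split h h1 h2]
  have b1 := S_bound h hb a (2*α)
  have b2 := S_bound h hb (2*β) b
  have c1 : ((2*α - a).toNat : ℝ) ≤ 1 := by
    have : (2*α - a).toNat ≤ 1 := by omega
    exact_mod_cast this
  have c2 : ((b - 2*β).toNat : ℝ) ≤ 1 := by
    have : (b - 2*β).toNat ≤ 1 := by omega
    exact_mod_cast this
  have : S h a (2*α) + S h (2*α) (2*β) + S h (2*β) b - S h (2*α) (2*β)
      = S h a (2*α) + S h (2*β) b := by ring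
  rw [this]
  calc |S h a (2*α) + S h (2*β) b| ≤ |S h a (2*α)| + |S h (2*β) b| := abs_add_le _ _
    _ ≤ 2 := by linarith

lemma Sa_trim (hv : ∀ n, f n = 1 ∨ f n = -1) (m : ℤ) {a b α β : ℤ}
    (h1 : a ≤ 2*α) (h1' : 2*α ≤ a + 1) (h2 : 2*α ≤ 2*β) (h3 : 2*β ≤ b) (h3' : b - 1 ≤ 2*β) :
    |Sa f m a b - Sa f m (2*α) (2*β)| ≤ 2 := by
  unfold Sa
  exact S_trim _ (term_abs hv m) h1 h1' h2 h3 h3'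

lemma Sb_trim (hv : ∀ n, f n = 1 ∨ f n = -1) (m : ℤ) {a b α β : ℤ}
    (h1 : a ≤ 2*α) (h1' : 2*α ≤ a + 1) (h2 : 2*α ≤ 2*β) (h3 : 2*β ≤ b) (h3' : b - 1 ≤ 2*β) :
    |Sb f m a b - Sb f m (2*α) (2*β)| ≤ 2 := by
  unfold Sb
  exact S_trim _ (termb_abs hv m) h1 h1' h2 h3 h3'

lemma exists_even_ge (a : ℤ) : ∃ α : ℤ, a ≤ 2*α ∧ 2*α ≤ a + 1 := by
  rcases Int.even_or_odd a with ⟨t, ht⟩ | ⟨t, ht⟩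
  · exact ⟨t, by omega⟩
  · exact ⟨t+1, by omega⟩

lemma exists_even_le (b : ℤ) : ∃ β : ℤ, b - 1 ≤ 2*β ∧ 2*β ≤ b := by
  rcases Int.even_or_odd b with ⟨t, ht⟩ | ⟨t, ht⟩
  · exact ⟨t, by omega⟩
  · exact ⟨t, by omega⟩

lemma toNat_cast_le {x y : ℤ} (hxy : x ≤ y) : ((x.toNat : ℝ)) ≤ (y.toNat : ℝ) := by
  have : x.toNat ≤ y.toNat := by omega
  exact_mod_cast this

lemma main : ∀ (m : ℕ) (ε : ℝ), 0 < ε → ∃ C : ℝ, 0 ≤ C ∧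
    ∀ f g : ℤ → ℝ, Pair f g → Pair g f → ∀ a b : ℤ,
      |Sb f (m:ℤ) a b| ≤ C + ε * ((b - a).toNat : ℝ) ∧
      (m ≠ 0 → |Sa f (m:ℤ) a b| ≤ C + ε * ((b - a).toNat : ℝ)) := by
  intro m
  induction m using Nat.strong_induction_on with
  | _ m IH =>
    intro ε hε
    have hnn : ∀ a b : ℤ, (0:ℝ) ≤ ε * ((b - a).toNat : ℝ) := fun a b => by positivity
    match m, IH with
    | 0, _ =>
      refine ⟨1, by norm_num, fun f g hfg hgf a b => ⟨?_, by simp⟩⟩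
      have := Sb_zero_bound hfg.1 a b
      have := hnn a b
      push_cast
      linarith
    | 1, _ =>
      -- threshold
      set T : ℕ := ⌈(6:ℝ)/ε⌉₊ + 6 with hT
      have hTε : (6:ℝ)/ε ≤ (T:ℝ) := by
        have := Nat.le_ceil ((6:ℝ)/ε)
        have : ((⌈(6:ℝ)/ε⌉₊ : ℝ)) ≤ (T:ℝ) := by
          rw [hT]; push_cast; linarith
        linarith [Nat.le_ceil ((6:ℝ)/ε)]
      set C : ℝ := (T:ℝ) + 6 with hC
      have hC0 : (0:ℝ) ≤ C := by positivity
      -- the key inner induction for Sb at lag 1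
      have key : ∀ L : ℕ, ∀ f g : ℤ → ℝ, Pair f g → Pair g f → ∀ a b : ℤ,
          (b - a).toNat ≤ L → |Sb f 1 a b| ≤ C + ε * ((b - a).toNat : ℝ) := by
        intro L
        induction L using Nat.strong_induction_on with
        | _ L IHL =>
          intro f g hfg hgf a b hL
          by_cases hsmall : ((b - a).toNat : ℤ) ≤ (T:ℤ)
          · have h1 := Sb_bound hfg.1 1 a b
            have h2 : ((b-a).toNat : ℝ) ≤ (T:ℝ) := by exact_mod_cast hsmall
            have := hnn a b
            rw [hC]
            linarith
          · push_neg at hsmall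
            have hba : (T:ℤ) + 1 ≤ b - a := by omega
            have hT6 : (6:ℤ) ≤ (T:ℤ) := by rw [hT]; push_cast; omega
            obtain ⟨α, hα1, hα2⟩ := exists_even_ge a
            obtain ⟨β, hβ1, hβ2⟩ := exists_even_le b
            have hαβ : 2*α ≤ 2*β := by omega
            have trim := Sb_trim hfg.1 1 hα1 hα2 hαβ hβ2 hβ1
            have mid : Sb f 1 (2*α) (2*β) = (-1:ℝ)^(0:ℤ) * Sb g 0 α β - Sb g 1 α β := by
              have : (1:ℤ) = 2*0+1 := by norm_num
              rw [this, Sb_odd hfg 0 α β]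
              norm_num
            have hb0 : |Sb g 0 α β| ≤ 1 := Sb_zero_bound hfg.2.1 α β
            have hlt : (β - α).toNat < L := by omega
            have hb1 := IHL _ hlt g f hgf hfg α β (le_refl _)
            -- numeric part
            have h2l : 2 * ((β - α).toNat : ℝ) ≤ ((b - a).toNat : ℝ) := by
              have : 2 * (β - α).toNat ≤ (b - a).toNat := by omega
              exact_mod_cast this
            have hLr : (T:ℝ) + 1 ≤ ((b - a).toNat : ℝ) := by
              have : (T:ℤ) + 1 ≤ ((b - a).toNat : ℤ) := by omega
              exact_mod_cast this
            have hgap : 3 ≤ ε * (((b - a).toNat : ℝ) - ((β - α).toNat : ℝ)) := by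
              have hd : (6:ℝ)/ε ≤ 2 * (((b - a).toNat : ℝ) - ((β - α).toNat : ℝ)) := by
                linarith
              have h2 := mul_le_mul_of_nonneg_left hd hε.le
              have h3 : ε * ((6:ℝ)/ε) = 6 := by field_simp
              rw [h3] at h2
              linarith
            have expand : |Sb f 1 a b| ≤ 2 + |Sb f 1 (2*α) (2*β)| := by
              have := abs_sub_abs_le_abs_sub (Sb f 1 a b) (Sb f 1 (2*α) (2*β))
              linarith
            have midb : |Sb f 1 (2*α) (2*β)| ≤ 1 + |Sb g 1 α β| := by
              rw [mid]
              norm_num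
              calc |Sb g 0 α β - Sb g 1 α β| ≤ |Sb g 0 α β| + |Sb g 1 α β| := abs_sub _ _
                _ ≤ 1 + |Sb g 1 α β| := by linarith
            have : ε * ((β - α).toNat : ℝ) + 3 ≤ ε * ((b - a).toNat : ℝ) := by
              have := mul_le_mul_of_nonneg_left h2l hε.le
              nlinarith
            linarith
      refine ⟨C + 3, by linarith, fun f g hfg hgf a b => ?_⟩
      rw [show ((1:ℕ):ℤ) = 1 by norm_num]
      refine ⟨?_, fun _ => ?_⟩
      · have := key (b - a).toNat f g hfg hgf a b (le_refl _)
        have := hnn a b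
        linarith
      · -- Sa at lag 1
        by_cases hsmall : ((b - a).toNat : ℤ) ≤ 2
        · have h1 := Sa_bound hfg.1 1 a b
          have h2 : ((b-a).toNat : ℝ) ≤ 2 := by exact_mod_cast hsmall
          have := hnn a b
          linarith
        · push_neg at hsmall
          obtain ⟨α, hα1, hα2⟩ := exists_even_ge a
          obtain ⟨β, hβ1, hβ2⟩ := exists_even_le b
          have hαβ : 2*α ≤ 2*β := by omega
          have trim := Sa_trim hfg.1 1 hα1 hα2 hαβ hβ2 hβ1
          have mid : Sa f 1 (2*α) (2*β) = (-1:ℝ)^(0:ℤ) * Sb g 0 α β + Sb g 1 α β := by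
            have : (1:ℤ) = 2*0+1 := by norm_num
            rw [this, Sa_odd hfg 0 α β]
            norm_num
          have hb0 : |Sb g 0 α β| ≤ 1 := Sb_zero_bound hfg.2.1 α β
          have hb1 := key (β - α).toNat g f hgf hfg α β (le_refl _)
          have hmono : ((β - α).toNat : ℝ) ≤ ((b - a).toNat : ℝ) := by
            have : (β - α).toNat ≤ (b - a).toNat := by omega
            exact_mod_cast this
          have expand : |Sa f 1 a b| ≤ 2 + |Sa f 1 (2*α) (2*β)| := by
            have := abs_sub_abs_le_abs_sub (Sa f 1 a b) (Sa f 1 (2*α) (2*β))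
            linarith
          have midb : |Sa f 1 (2*α) (2*β)| ≤ 1 + |Sb g 1 α β| := by
            rw [mid]
            norm_num
            calc |Sb g 0 α β + Sb g 1 α β| ≤ |Sb g 0 α β| + |Sb g 1 α β| := abs_add_le _ _
              _ ≤ 1 + |Sb g 1 α β| := by linarith
          have hmε := mul_le_mul_of_nonneg_left hmono hε.le
          linarith
    | (m₂+2), IH =>
      set m : ℕ := m₂ + 2 with hm
      rcases Nat.even_or_odd m with ⟨j, hj⟩ | ⟨j, hj⟩
      · -- m = 2 j, j ≥ 1
        have hjm : j < m := by omega
        have hj1 : j ≠ 0 := by omega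
        obtain ⟨Cj, hCj0, hCj⟩ := IH j hjm ε hε
        refine ⟨2*Cj + 4 + 2*ε, by linarith, fun f g hfg hgf a b => ?_⟩
        have hcast : ((m:ℕ):ℤ) = 2*(j:ℤ) := by omega
        by_cases hsmall : ((b - a).toNat : ℤ) ≤ 2
        · have h1 := Sa_bound hfg.1 m a b
          have h1' := Sb_bound hfg.1 m a b
          have h2 : ((b-a).toNat : ℝ) ≤ 2 := by exact_mod_cast hsmall
          have := hnn a b
          exact ⟨by linarith, fun _ => by linarith⟩
        · push_neg at hsmall
          obtain ⟨α, hα1, hα2⟩ := exists_even_ge a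
          obtain ⟨β, hβ1, hβ2⟩ := exists_even_le b
          have hαβ : 2*α ≤ 2*β := by omega
          have h2l : 2 * ((β - α).toNat : ℝ) ≤ ((b - a).toNat : ℝ) + 2 := by
            have : 2 * (β - α).toNat ≤ (b - a).toNat + 2 := by omega
            exact_mod_cast this
          have hja := (hCj g f hgf hfg α β).2 hj1
          have hcoef : |(1 + (-1:ℝ)^(j:ℤ))| ≤ 2 := by
            rcases zpm (j:ℤ) with h | h <;> rw [h] <;> norm_num
          have hcoef' : |(1 - (-1:ℝ)^(j:ℤ))| ≤ 2 := by
            rcases zpm (j:ℤ) with h | h <;> rw [h] <;> norm_num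
          have hmε := mul_le_mul_of_nonneg_left h2l hε.le
          constructor
          · have trim := Sb_trim hfg.1 (m:ℤ) hα1 hα2 hαβ hβ2 hβ1
            have mid : Sb f (m:ℤ) (2*α) (2*β) = (1 - (-1:ℝ)^(j:ℤ)) * Sa g (j:ℤ) α β := by
              rw [hcast]; exact Sb_even hfg (j:ℤ) α β
            have expand : |Sb f (m:ℤ) a b| ≤ 2 + |Sb f (m:ℤ) (2*α) (2*β)| := by
              have := abs_sub_abs_le_abs_sub (Sb f (m:ℤ) a b) (Sb f (m:ℤ) (2*α) (2*β))
              linarith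
            have midb : |Sb f (m:ℤ) (2*α) (2*β)| ≤ 2 * |Sa g (j:ℤ) α β| := by
              rw [mid, abs_mul]
              exact mul_le_mul_of_nonneg_right hcoef' (abs_nonneg _)
            linarith [abs_nonneg (Sa g (j:ℤ) α β)]
          · intro _
            have trim := Sa_trim hfg.1 (m:ℤ) hα1 hα2 hαβ hβ2 hβ1
            have mid : Sa f (m:ℤ) (2*α) (2*β) = (1 + (-1:ℝ)^(j:ℤ)) * Sa g (j:ℤ) α β := by
              rw [hcast]; exact Sa_even hfg (j:ℤ) α β
            have expand : |Sa f (m:ℤ) a b| ≤ 2 + |Sa f (m:ℤ) (2*α) (2*β)| := by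
              have := abs_sub_abs_le_abs_sub (Sa f (m:ℤ) a b) (Sa f (m:ℤ) (2*α) (2*β))
              linarith
            have midb : |Sa f (m:ℤ) (2*α) (2*β)| ≤ 2 * |Sa g (j:ℤ) α β| := by
              rw [mid, abs_mul]
              exact mul_le_mul_of_nonneg_right hcoef (abs_nonneg _)
            linarith [abs_nonneg (Sa g (j:ℤ) α β)]
      · -- m = 2 j + 1, j ≥ 1
        have hjm : j < m := by omega
        have hj1m : j + 1 < m := by omega
        obtain ⟨Cj, hCj0, hCj⟩ := IH j hjm ε hε
        obtain ⟨Cj1, hCj10, hCj1⟩ := IH (j+1) hj1m ε hε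
        refine ⟨Cj + Cj1 + 4 + 2*ε, by linarith, fun f g hfg hgf a b => ?_⟩
        have hcast : ((m:ℕ):ℤ) = 2*(j:ℤ)+1 := by omega
        by_cases hsmall : ((b - a).toNat : ℤ) ≤ 2
        · have h1 := Sa_bound hfg.1 m a b
          have h1' := Sb_bound hfg.1 m a b
          have h2 : ((b-a).toNat : ℝ) ≤ 2 := by exact_mod_cast hsmall
          have := hnn a b
          exact ⟨by linarith, fun _ => by linarith⟩
        · push_neg at hsmall
          obtain ⟨α, hα1, hα2⟩ := exists_even_ge a
          obtain ⟨β, hβ1, hβ2⟩ := exists_even_le b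
          have hαβ : 2*α ≤ 2*β := by omega
          have h2l : 2 * ((β - α).toNat : ℝ) ≤ ((b - a).toNat : ℝ) + 2 := by
            have : 2 * (β - α).toNat ≤ (b - a).toNat + 2 := by omega
            exact_mod_cast this
          have hja := (hCj g f hgf hfg α β).1
          have hja1 : |Sb g ((j:ℤ)+1) α β| ≤ Cj1 + ε * ((β - α).toNat : ℝ) := by
            have := (hCj1 g f hgf hfg α β).1
            have e : (((j+1:ℕ)):ℤ) = (j:ℤ)+1 := by push_cast; ring
            rwa [e] at this
          have hmε := mul_le_mul_of_nonneg_left h2l hε.le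
          have habsj : |(-1:ℝ)^(j:ℤ)| = 1 := zabs _
          constructor
          · have trim := Sb_trim hfg.1 (m:ℤ) hα1 hα2 hαβ hβ2 hβ1
            have mid : Sb f (m:ℤ) (2*α) (2*β)
                = (-1:ℝ)^(j:ℤ) * Sb g (j:ℤ) α β - Sb g ((j:ℤ)+1) α β := by
              rw [hcast]; exact Sb_odd hfg (j:ℤ) α β
            have expand : |Sb f (m:ℤ) a b| ≤ 2 + |Sb f (m:ℤ) (2*α) (2*β)| := by
              have := abs_sub_abs_le_abs_sub (Sb f (m:ℤ) a b) (Sb f (m:ℤ) (2*α) (2*β))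
              linarith
            have midb : |Sb f (m:ℤ) (2*α) (2*β)| ≤ |Sb g (j:ℤ) α β| + |Sb g ((j:ℤ)+1) α β| := by
              rw [mid]
              calc |(-1:ℝ)^(j:ℤ) * Sb g (j:ℤ) α β - Sb g ((j:ℤ)+1) α β|
                  ≤ |(-1:ℝ)^(j:ℤ) * Sb g (j:ℤ) α β| + |Sb g ((j:ℤ)+1) α β| := abs_sub _ _
                _ = |Sb g (j:ℤ) α β| + |Sb g ((j:ℤ)+1) α β| := by rw [abs_mul, habsj, one_mul]
            linarith
          · intro _
            have trim := Sa_trim hfg.1 (m:ℤ) hα1 hα2 hαβ hβ2 hβ1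
            have mid : Sa f (m:ℤ) (2*α) (2*β)
                = (-1:ℝ)^(j:ℤ) * Sb g (j:ℤ) α β + Sb g ((j:ℤ)+1) α β := by
              rw [hcast]; exact Sa_odd hfg (j:ℤ) α β
            have expand : |Sa f (m:ℤ) a b| ≤ 2 + |Sa f (m:ℤ) (2*α) (2*β)| := by
              have := abs_sub_abs_le_abs_sub (Sa f (m:ℤ) a b) (Sa f (m:ℤ) (2*α) (2*β))
              linarith
            have midb : |Sa f (m:ℤ) (2*α) (2*β)| ≤ |Sb g (j:ℤ) α β| + |Sb g ((j:ℤ)+1) α β| := by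
              rw [mid]
              calc |(-1:ℝ)^(j:ℤ) * Sb g (j:ℤ) α β + Sb g ((j:ℤ)+1) α β|
                  ≤ |(-1:ℝ)^(j:ℤ) * Sb g (j:ℤ) α β| + |Sb g ((j:ℤ)+1) α β| := abs_add_le _ _
                _ = |Sb g (j:ℤ) α β| + |Sb g ((j:ℤ)+1) α β| := by rw [abs_mul, habsj, one_mul]
            linarith

end RSaux

open RSaux

/-- The off-diagonal autocorrelation coefficients of the binary Rudin–Shapiro
sequence all vanish. -/
theorem rudinShapiro_autocorrelation_eq_zero
    (w : ℤ → ℝ)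
    (hval : ∀ n, w n = 1 ∨ w n = -1)
    (hm1 : w (-1) = -1) (h0 : w 0 = 1)
    (hrec1 : ∀ n : ℤ, ∀ l : ℤ, l = 0 ∨ l = 1 → w (4 * n + l) = w n)
    (hrec2 : ∀ n : ℤ, ∀ l : ℤ, l = 2 ∨ l = 3 → w (4 * n + l) = (-1 : ℝ) ^ (n + l) * w n) :
    ∀ m : ℤ, m ≠ 0 → Tendsto
      (fun N : ℕ => (∑ n ∈ Finset.Icc (-(N : ℤ)) N, w n * w (n + m)) / (2 * N + 1))
      atTop (nhds 0) := by
  -- the companion sequence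
  set u : ℤ → ℝ := fun k => w (2*k) with hu
  have hvalu : ∀ n, u n = 1 ∨ u n = -1 := fun n => hval (2*n)
  have huw1 : ∀ k : ℤ, u (2*k) = w k := by
    intro k
    have e : 2*(2*k) = 4*k + 0 := by ring
    rw [hu]; simp only []
    rw [e, hrec1 k 0 (Or.inl rfl)]
  have huw2 : ∀ k : ℤ, u (2*k+1) = (-1:ℝ)^k * w k := by
    intro k
    have e : 2*(2*k+1) = 4*k + 2 := by ring
    rw [hu]; simp only []
    rw [e, hrec2 k 2 (Or.inl rfl)]
    have : (-1:ℝ)^(k+2) = (-1:ℝ)^k * (-1:ℝ)^(2:ℤ) := zpow_add₀ neg_one_zpow_ne k 2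
    rw [this]; norm_num
  have hwu2 : ∀ k : ℤ, w (2*k+1) = (-1:ℝ)^k * u k := by
    intro k
    have huu : ∀ x : ℤ, u x = w (2*x) := fun _ => rfl
    rcases Int.even_or_odd k with ⟨t, ht⟩ | ⟨t, ht⟩
    · have hk : k = 2*t := by omega
      rw [hk, huu, show 2*(2*t)+1 = 4*t+1 by ring, hrec1 t 1 (Or.inr rfl),
        show 2*(2*t) = 4*t+0 by ring, hrec1 t 0 (Or.inl rfl), zeven]
      ring
    · have hk : k = 2*t+1 := by omega
      rw [hk, huu, show 2*(2*t+1)+1 = 4*t+3 by ring, hrec2 t 3 (Or.inr rfl),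
        show 2*(2*(t:ℤ)+1) = 4*t+2 by ring, hrec2 t 2 (Or.inl rfl), zodd,
        show (t:ℤ)+3 = (t+2)+1 by ring, zpow_add₀ neg_one_zpow_ne (t+2) 1]
      ring
  have hwu : Pair w u := ⟨hval, hvalu, fun _ => rfl, hwu2⟩
  have huwp : Pair u w := ⟨hvalu, hval, huw1, huw2⟩
  intro m hm
  rw [Metric.tendsto_atTop]
  intro ε hε
  obtain ⟨C, hC0, hC⟩ := main m.natAbs (ε/2) (half_pos hε)
  have hμ : m.natAbs ≠ 0 := by omega
  -- uniform bound on the Icc sums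
  have key : ∀ N : ℕ, |∑ n ∈ Finset.Icc (-(N : ℤ)) N, w n * w (n + m)|
      ≤ C + (ε/2) * (2*(N:ℝ)+1) := by
    intro N
    have hIcc : Finset.Icc (-(N:ℤ)) N = Finset.Ico (-(N:ℤ)) (N+1) := by
      ext x; simp
    rcases lt_or_gt_of_ne hm with hneg | hpos
    · -- m < 0 : reindex
      have hsum : ∑ n ∈ Finset.Icc (-(N : ℤ)) N, w n * w (n + m)
          = Sa w (m.natAbs : ℤ) (-(N:ℤ)+m) ((N:ℤ)+1+m) := by
        rw [hIcc]
        unfold Sa S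
        rw [← Finset.map_add_right_Ico _ _ m, Finset.sum_map]
        apply Finset.sum_congr rfl
        intro n _
        simp only [addRightEmbedding_apply]
        have e : n + m + (m.natAbs : ℤ) = n := by omega
        rw [e]
        ring
      rw [hsum]
      have := (hC w u hwu huwp (-(N:ℤ)+m) ((N:ℤ)+1+m)).2 hμ
      have e2 : ((((N:ℤ)+1+m) - ((-(N:ℤ))+m)).toNat : ℝ) = 2*(N:ℝ)+1 := by
        have : (((N:ℤ)+1+m) - ((-(N:ℤ))+m)).toNat = 2*N+1 := by omega
        rw [this]; push_cast; ring
      rwa [e2] at this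
    · -- m > 0
      have hsum : ∑ n ∈ Finset.Icc (-(N : ℤ)) N, w n * w (n + m)
          = Sa w (m.natAbs : ℤ) (-(N:ℤ)) ((N:ℤ)+1) := by
        rw [hIcc]
        unfold Sa S
        apply Finset.sum_congr rfl
        intro n _
        have e : (m.natAbs : ℤ) = m := by omega
        rw [e]
      rw [hsum]
      have := (hC w u hwu huwp (-(N:ℤ)) ((N:ℤ)+1)).2 hμ
      have e2 : ((((N:ℤ)+1) - (-(N:ℤ))).toNat : ℝ) = 2*(N:ℝ)+1 := by
        have : (((N:ℤ)+1) - (-(N:ℤ))).toNat = 2*N+1 := by omega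
        rw [this]; push_cast; ring
      rwa [e2] at this
  -- choose the threshold
  refine ⟨⌈C/ε⌉₊ + 1, fun N hN => ?_⟩
  have hDen : (0:ℝ) < 2*(N:ℝ)+1 := by positivity
  rw [Real.dist_eq, sub_zero, abs_div, abs_of_pos hDen, div_lt_iff₀ hDen]
  have hNc : C/ε ≤ (N:ℝ) := by
    have h1 : C/ε ≤ (⌈C/ε⌉₊ : ℝ) := Nat.le_ceil _
    have h2 : ((⌈C/ε⌉₊ : ℕ) : ℝ) ≤ (N:ℝ) := by
      have : ⌈C/ε⌉₊ ≤ N := by omega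
      exact_mod_cast this
    linarith
  have hCε : C < (ε/2) * (2*(N:ℝ)+1) := by
    have : ε * (C/ε) ≤ ε * (N:ℝ) := mul_le_mul_of_nonneg_left hNc hε.le
    rw [mul_div_cancel₀ _ (ne_of_gt hε)] at this
    nlinarith
  calc |∑ n ∈ Finset.Icc (-(N : ℤ)) N, w n * w (n + m)| ≤ C + (ε/2) * (2*(N:ℝ)+1) := key N
    _ < ε * (2*(N:ℝ)+1) := by nlinarith
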